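/- Let p ∈ (1,∞) and let X be a real Banach space that satisfies the hypercube Stein inequality with constant 𝔰 for exponent p and the hypercube UMD⁻ inequality with constant β for exponent p. Then for every positive integer n and all functions f_1,…,f_n : 𝒞_n → X, one has ‖Σ_{i=1}^n Δ^{−1}∂_i f_i‖_{L_p(𝒞_n;X)} ≤ 𝔰 β (2^{−n} Σ_{δ∈𝒞_n} ‖Σ_{i=1}^n δ_i ∂_i f_i‖_{L_p(𝒞_n;X)}^p)^{1/p}. -/

import Mathlib

noncomputable section

open Finset

/-- The sign `±1` attached to a boolean coordinate of the discrete cube. -/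
def sgn (b : Bool) : ℝ := if b then 1 else -1

variable {X : Type*} [NormedAddCommGroup X] [NormedSpace ℝ X]

/-- `L_p` norm of `f : 𝒞_n → X` with respect to the uniform probability measure. -/
def cubeLpNorm (n : ℕ) (p : ℝ) (f : (Fin n → Bool) → X) : ℝ :=
  (((2 : ℝ) ^ n)⁻¹ * ∑ ε : Fin n → Bool, ‖f ε‖ ^ p) ^ (1 / p)

/-- Conditional expectation given the coordinates in `S`: average of `f η` over all
`η` agreeing with `ε` on `S`. -/
def cubeCondExp (n : ℕ) (S : Finset (Fin n)) (f : (Fin n → Bool) → X) :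
    (Fin n → Bool) → X := fun ε =>
  ((2 : ℝ) ^ (n - S.card))⁻¹ •
    ∑ η ∈ univ.filter (fun η : Fin n → Bool => ∀ j ∈ S, η j = ε j), f η

/-- The set of the first `i` coordinates (`0`-based). -/
def firstIdx (n i : ℕ) : Finset (Fin n) := univ.filter fun j => (j : ℕ) < i

/-- `𝔈_i`: conditioning on the first `i` coordinates. -/
def Ei (n i : ℕ) (f : (Fin n → Bool) → X) : (Fin n → Bool) → X :=
  cubeCondExp n (firstIdx n i) f

/-- `𝔈_i^π`: conditioning on the coordinates `π(1),…,π(i)`. -/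
def Epi (n : ℕ) (π : Equiv.Perm (Fin n)) (i : ℕ) (f : (Fin n → Bool) → X) :
    (Fin n → Bool) → X :=
  cubeCondExp n ((firstIdx n i).image π) f

/-- `∂_i`: the `i`-th discrete partial derivative. -/
def cubeDeriv (n : ℕ) (i : Fin n) (f : (Fin n → Bool) → X) : (Fin n → Bool) → X :=
  fun ε => (2 : ℝ)⁻¹ • (f ε - f (Function.update ε i (!(ε i))))

/-- `X` satisfies the hypercube Stein inequality with constant `s` for exponent `p`. -/
def SteinIneq (X : Type*) [NormedAddCommGroup X] [NormedSpace ℝ X] (p s : ℝ) : Prop :=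
  ∀ m : ℕ, 0 < m → ∀ (π : Equiv.Perm (Fin m)) (g : Fin m → (Fin m → Bool) → X),
    (((2 : ℝ) ^ m)⁻¹ * ∑ δ : Fin m → Bool,
        (cubeLpNorm m p fun ε => ∑ i : Fin m, sgn (δ i) • Epi m π ((i : ℕ) + 1) (g i) ε) ^ p) ^ (1 / p)
      ≤ s * (((2 : ℝ) ^ m)⁻¹ * ∑ δ : Fin m → Bool,
        (cubeLpNorm m p fun ε => ∑ i : Fin m, sgn (δ i) • g i ε) ^ p) ^ (1 / p)

/-- `X` satisfies the hypercube UMD⁻ inequality with constant `b` for exponent `p`. -/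
def UMDminusIneq (X : Type*) [NormedAddCommGroup X] [NormedSpace ℝ X] (p b : ℝ) : Prop :=
  ∀ m : ℕ, 0 < m → ∀ (π : Equiv.Perm (Fin m)) (d : Fin m → (Fin m → Bool) → X),
    (∀ i : Fin m, Epi m π ((i : ℕ) + 1) (d i) = d i ∧ Epi m π (i : ℕ) (d i) = 0) →
    cubeLpNorm m p (fun ε => ∑ i : Fin m, d i ε)
      ≤ b * (((2 : ℝ) ^ m)⁻¹ * ∑ δ : Fin m → Bool,
        (cubeLpNorm m p fun ε => ∑ i : Fin m, sgn (δ i) • d i ε) ^ p) ^ (1 / p)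

/-- The Walsh function `w_A`. -/
def walsh (n : ℕ) (A : Finset (Fin n)) (ε : Fin n → Bool) : ℝ := ∏ i ∈ A, sgn (ε i)

/-- The Walsh coefficient `f̂(A)`. -/
def walshCoeff (n : ℕ) (f : (Fin n → Bool) → X) (A : Finset (Fin n)) : X :=
  ((2 : ℝ) ^ n)⁻¹ • ∑ ε : Fin n → Bool, walsh n A ε • f ε

/-- `Δ⁻¹∂_i f = Σ_{A ∋ i} |A|⁻¹ f̂(A) w_A`. -/
def invLapDeriv (n : ℕ) (i : Fin n) (f : (Fin n → Bool) → X) : (Fin n → Bool) → X :=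
  fun ε => ∑ A ∈ univ.filter (fun A : Finset (Fin n) => i ∈ A),
    ((A.card : ℝ)⁻¹ * walsh n A ε) • walshCoeff n f A

lemma sgn_mul_sgn (a b : Bool) : sgn a * sgn b = if a = b then (1:ℝ) else -1 := by
  cases a <;> cases b <;> norm_num [sgn]

lemma prod_pair (n : ℕ) (S : Finset (Fin n)) (ε η : Fin n → Bool) :
    ∏ i ∈ S, (sgn (ε i) * sgn (η i) + 1) =
      if (∀ j ∈ S, η j = ε j) then (2:ℝ) ^ S.card else 0 := by
  by_cases h : ∀ j ∈ S, η j = ε j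
  · rw [if_pos h]
    rw [Finset.prod_congr rfl (fun j hj => by rw [sgn_mul_sgn, if_pos (h j hj).symm])]
    norm_num
  · rw [if_neg h]
    push_neg at h
    obtain ⟨j, hj, hne⟩ := h
    refine Finset.prod_eq_zero hj ?_
    rw [sgn_mul_sgn, if_neg (fun hh => hne hh.symm)]
    norm_num

lemma condExp_walsh_repr (n : ℕ) (S : Finset (Fin n)) (f : (Fin n → Bool) → X)
    (ε : Fin n → Bool) :
    cubeCondExp n S f ε = ∑ A ∈ S.powerset, walsh n A ε • walshCoeff n f A := by
  have hc : S.card ≤ n := le_trans (Finset.card_le_univ S) (by simp)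
  have key : ((2:ℝ)^(n - S.card))⁻¹ = ((2:ℝ)^n)⁻¹ * 2^S.card := by
    have h2 : (2:ℝ)^(n - S.card) * 2^S.card = 2^n := by
      rw [← pow_add, Nat.sub_add_cancel hc]
    field_simp [← h2]
    exact h2.symm
  symm
  calc ∑ A ∈ S.powerset, walsh n A ε • walshCoeff n f A
      = ∑ A ∈ S.powerset, ((2:ℝ)^n)⁻¹ •
          ∑ η : Fin n → Bool, (walsh n A ε * walsh n A η) • f η := by
        refine Finset.sum_congr rfl fun A _ => ?_
        rw [walshCoeff, smul_comm, Finset.smul_sum]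
        congr 1
        exact Finset.sum_congr rfl fun η _ => (smul_smul _ _ _)
    _ = ((2:ℝ)^n)⁻¹ • ∑ η : Fin n → Bool,
          (∑ A ∈ S.powerset, walsh n A ε * walsh n A η) • f η := by
        rw [← Finset.smul_sum, Finset.sum_comm]
        congr 1
        exact Finset.sum_congr rfl fun η _ => (Finset.sum_smul).symm
    _ = ((2:ℝ)^n)⁻¹ • ∑ η : Fin n → Bool,
          (if (∀ j ∈ S, η j = ε j) then ((2:ℝ)^S.card) • f η else 0) := by
        congr 1
        refine Finset.sum_congr rfl fun η _ => ?_
        have : ∑ A ∈ S.powerset, walsh n A ε * walsh n A η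
            = if (∀ j ∈ S, η j = ε j) then (2:ℝ)^S.card else 0 := by
          rw [← prod_pair n S ε η, Finset.prod_add]
          simp [walsh, Finset.prod_mul_distrib]
        rw [this]
        split <;> simp
    _ = cubeCondExp n S f ε := by
        rw [cubeCondExp, ← Finset.sum_filter, key]
        simp only [Finset.smul_sum, smul_smul]

lemma sum_walsh_mul_walsh (n : ℕ) (A B : Finset (Fin n)) :
    ∑ ε : Fin n → Bool, walsh n B ε * walsh n A ε = if B = A then (2:ℝ)^n else 0 := by
  have hw : ∀ ε : Fin n → Bool, walsh n B ε * walsh n A ε =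
      ∏ i : Fin n, ((if i ∈ B then sgn (ε i) else 1) * (if i ∈ A then sgn (ε i) else 1)) := by
    intro ε
    rw [Finset.prod_mul_distrib, Finset.prod_ite_mem, Finset.prod_ite_mem,
      Finset.univ_inter, Finset.univ_inter]
    rfl
  simp only [hw]
  have hswap : ∑ ε : Fin n → Bool, ∏ i : Fin n,
      ((if i ∈ B then sgn (ε i) else 1) * (if i ∈ A then sgn (ε i) else 1)) =
      ∏ i : Fin n, ∑ b : Bool, ((if i ∈ B then sgn b else 1) * (if i ∈ A then sgn b else 1)) := by
    rw [Finset.prod_univ_sum]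
    rw [Fintype.piFinset_univ]
  rw [hswap]
  by_cases hBA : B = A
  · subst hBA
    rw [if_pos rfl]
    have : ∀ i : Fin n, ∑ b : Bool, ((if i ∈ B then sgn b else 1) * (if i ∈ B then sgn b else 1)) = 2 := by
      intro i
      by_cases hi : i ∈ B <;> simp [hi, sgn] <;> norm_num
    rw [Finset.prod_congr rfl (fun i _ => this i)]
    simp
  · rw [if_neg hBA]
    have : ∃ i, (i ∈ B) ≠ (i ∈ A) := by
      by_contra hco
      push_neg at hco
      exact hBA (Finset.ext fun i => by
        have := hco i
        constructor <;> intro h <;> simp_all)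
    obtain ⟨i₀, hi₀⟩ := this
    refine Finset.prod_eq_zero (Finset.mem_univ i₀) ?_
    by_cases h1 : i₀ ∈ B <;> by_cases h2 : i₀ ∈ A <;> simp_all [sgn]

lemma walshCoeff_walsh_smul (n : ℕ) (A B : Finset (Fin n)) (x : X) :
    walshCoeff n (fun ε => walsh n A ε • x) B = if B = A then x else 0 := by
  rw [walshCoeff]
  have : ∀ ε : Fin n → Bool, walsh n B ε • walsh n A ε • x
      = (walsh n B ε * walsh n A ε) • x := fun ε => smul_smul _ _ _
  simp only [this]
  rw [← Finset.sum_smul, sum_walsh_mul_walsh]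
  split
  · rw [smul_smul]
    norm_num
  · simp

lemma condExp_walsh (n : ℕ) (S A : Finset (Fin n)) (x : X) :
    cubeCondExp n S (fun ε => walsh n A ε • x) =
      fun ε => if A ⊆ S then walsh n A ε • x else 0 := by
  funext ε
  rw [condExp_walsh_repr]
  have : ∀ B ∈ S.powerset, walsh n B ε • walshCoeff n (fun ε => walsh n A ε • x) B
      = if B = A then walsh n B ε • x else 0 := by
    intro B _
    rw [walshCoeff_walsh_smul]
    split <;> simp
  rw [Finset.sum_congr rfl this, Finset.sum_ite_eq' S.powerset A (fun B => walsh n B ε • x)]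
  simp [Finset.mem_powerset]

lemma condExp_sum (n : ℕ) (S : Finset (Fin n)) {ι : Type*} (s : Finset ι)
    (F : ι → (Fin n → Bool) → X) :
    cubeCondExp n S (fun ε => ∑ i ∈ s, F i ε) =
      fun ε => ∑ i ∈ s, cubeCondExp n S (F i) ε := by
  funext ε
  rw [cubeCondExp]
  rw [Finset.sum_comm, Finset.smul_sum]
  rfl

lemma condExp_condExp (n : ℕ) (S T : Finset (Fin n)) (hTS : T ⊆ S)
    (f : (Fin n → Bool) → X) :
    cubeCondExp n T (cubeCondExp n S f) = cubeCondExp n T f := by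
  have h1 : cubeCondExp n S f = fun ε => ∑ A ∈ S.powerset,
      (fun ε' => walsh n A ε' • walshCoeff n f A) ε := by
    funext ε
    exact condExp_walsh_repr n S f ε
  rw [h1, condExp_sum]
  funext ε
  have : ∀ A ∈ S.powerset, cubeCondExp n T (fun ε' => walsh n A ε' • walshCoeff n f A) ε
      = if A ⊆ T then walsh n A ε • walshCoeff n f A else 0 := by
    intro A _
    rw [condExp_walsh]
  rw [Finset.sum_congr rfl this, ← Finset.sum_filter]
  have hset : S.powerset.filter (fun A => A ⊆ T) = T.powerset := by
    ext A
    simp only [Finset.mem_filter, Finset.mem_powerset]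
    exact ⟨fun h => h.2, fun h => ⟨h.trans hTS, h⟩⟩
  rw [hset, ← condExp_walsh_repr]

lemma walsh_update (n : ℕ) (A : Finset (Fin n)) (j : Fin n) (ε : Fin n → Bool) :
    walsh n A (Function.update ε j (!(ε j))) = (if j ∈ A then -1 else 1) * walsh n A ε := by
  by_cases hj : j ∈ A
  · rw [if_pos hj, walsh, walsh, ← Finset.mul_prod_erase A _ hj, ← Finset.mul_prod_erase A _ hj]
    have h1 : ∏ i ∈ A.erase j, sgn (Function.update ε j (!(ε j)) i) = ∏ i ∈ A.erase j, sgn (ε i) := by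
      refine Finset.prod_congr rfl fun i hi => ?_
      rw [Function.update_of_ne (Finset.ne_of_mem_erase hi)]
    rw [h1, Function.update_self]
    have : sgn (!(ε j)) = - sgn (ε j) := by cases (ε j) <;> norm_num [sgn]
    rw [this]
    ring
  · rw [if_neg hj, one_mul, walsh, walsh]
    refine Finset.prod_congr rfl fun i hi => ?_
    rw [Function.update_of_ne (fun h => hj (by rwa [h] at hi))]

lemma walshCoeff_deriv (n : ℕ) (j : Fin n) (f : (Fin n → Bool) → X) (A : Finset (Fin n)) :
    walshCoeff n (cubeDeriv n j f) A = if j ∈ A then walshCoeff n f A else 0 := by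
  have ff : ∀ ε : Fin n → Bool,
      Function.update (Function.update ε j (!(ε j))) j (!(Function.update ε j (!(ε j)) j)) = ε := by
    intro ε
    funext i
    by_cases hi : i = j
    · subst hi; simp
    · simp [Function.update_of_ne hi]
  have flipinv : Function.Involutive (fun ε : Fin n → Bool => Function.update ε j (!(ε j))) := ff
  have hre : ∑ ε : Fin n → Bool, walsh n A ε • f (Function.update ε j (!(ε j)))
      = ∑ ε : Fin n → Bool, (walsh n A (Function.update ε j (!(ε j)))) • f ε := by
    exact Fintype.sum_equiv flipinv.toPerm _ _ (fun ε => by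
      simp only [Function.Involutive.coe_toPerm]
      rw [ff ε])
  rw [walshCoeff]
  have expand : ∀ ε : Fin n → Bool, walsh n A ε • cubeDeriv n j f ε
      = (2:ℝ)⁻¹ • (walsh n A ε • f ε) - (2:ℝ)⁻¹ • (walsh n A ε • f (Function.update ε j (!(ε j)))) := by
    intro ε
    simp only [cubeDeriv]
    rw [smul_comm (walsh n A ε) ((2:ℝ)⁻¹) (f ε - f (Function.update ε j (!(ε j))))]
    rw [smul_sub (walsh n A ε) (f ε) (f (Function.update ε j (!(ε j)))), smul_sub]
  simp only [expand]
  rw [Finset.sum_sub_distrib, ← Finset.smul_sum, ← Finset.smul_sum, hre]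
  have : ∀ ε : Fin n → Bool, (walsh n A (Function.update ε j (!(ε j)))) • f ε
      = (if j ∈ A then -1 else 1 : ℝ) • (walsh n A ε • f ε) := by
    intro ε
    rw [walsh_update]
    exact mul_smul _ _ _
  simp only [this]
  rw [← Finset.smul_sum]
  by_cases hj : j ∈ A
  · rw [if_pos hj, if_pos hj, walshCoeff]
    simp only [smul_smul]
    rw [← sub_smul]
    norm_num
  · rw [if_neg hj, if_neg hj]
    simp only [smul_smul]
    rw [← sub_smul]
    norm_num

lemma condExp_deriv_eq_zero (n : ℕ) (T : Finset (Fin n)) (j : Fin n) (hj : j ∉ T)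
    (f : (Fin n → Bool) → X) :
    cubeCondExp n T (cubeDeriv n j f) = 0 := by
  funext ε
  rw [Pi.zero_apply, condExp_walsh_repr]
  refine Finset.sum_eq_zero fun A hA => ?_
  rw [walshCoeff_deriv]
  rw [if_neg (fun hjA => hj (Finset.mem_powerset.1 hA hjA))]
  simp

lemma mem_image_firstIdx (n : ℕ) (π : Equiv.Perm (Fin n)) (i : ℕ) (a : Fin n) :
    a ∈ (firstIdx n i).image π ↔ ((π⁻¹ a : Fin n) : ℕ) < i := by
  simp only [Finset.mem_image, firstIdx, Finset.mem_filter, Finset.mem_univ, true_and]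
  constructor
  · rintro ⟨k, hk, hke⟩
    rw [← hke, Equiv.Perm.coe_inv, Equiv.symm_apply_apply]
    exact hk
  · intro h
    exact ⟨π⁻¹ a, h, π.apply_symm_apply a⟩

lemma count_perm (n : ℕ) (A : Finset (Fin n)) (j : Fin n) (hj : j ∈ A) :
    ((univ.filter fun π : Equiv.Perm (Fin n) =>
        ∀ a ∈ A, π⁻¹ a ≤ π⁻¹ j).card) * A.card = n.factorial := by
  set F : Fin n → Finset (Equiv.Perm (Fin n)) :=
    fun b => univ.filter fun π : Equiv.Perm (Fin n) => ∀ a ∈ A, π⁻¹ a ≤ π⁻¹ b with hF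
  have hswapmem : ∀ a ∈ A, ∀ x ∈ A, Equiv.swap j a x ∈ A := by
    intro a ha x hx
    rcases eq_or_ne x j with rfl | hxj
    · rwa [Equiv.swap_apply_left]
    rcases eq_or_ne x a with rfl | hxa
    · rwa [Equiv.swap_apply_right]
    · rwa [Equiv.swap_apply_of_ne_of_ne hxj hxa]
  have hinv : ∀ (a : Fin n) (π : Equiv.Perm (Fin n)) (x : Fin n),
      (Equiv.swap j a * π)⁻¹ x = π⁻¹ (Equiv.swap j a x) := by
    intro a π x
    rw [mul_inv_rev, Equiv.Perm.mul_apply, Equiv.swap_inv]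
  have hcard : ∀ a ∈ A, (F a).card = (F j).card := by
    intro a ha
    refine (Finset.card_bij' (fun π _ => Equiv.swap j a * π) (fun π _ => Equiv.swap j a * π)
      ?_ ?_ ?_ ?_).symm
    · intro π hπ
      simp only [hF, Finset.mem_filter, Finset.mem_univ, true_and] at hπ ⊢
      intro x hx
      rw [hinv, hinv, Equiv.swap_apply_right]
      exact hπ (Equiv.swap j a x) (hswapmem a ha x hx)
    · intro π hπ
      simp only [hF, Finset.mem_filter, Finset.mem_univ, true_and] at hπ ⊢
      intro x hx
      rw [hinv, hinv, Equiv.swap_apply_left]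
      exact hπ (Equiv.swap j a x) (hswapmem a ha x hx)
    · intro π _
      show Equiv.swap j a * (Equiv.swap j a * π) = π
      rw [← mul_assoc, Equiv.swap_mul_self, one_mul]
    · intro π _
      show Equiv.swap j a * (Equiv.swap j a * π) = π
      rw [← mul_assoc, Equiv.swap_mul_self, one_mul]
  have hcover : (univ : Finset (Equiv.Perm (Fin n))) = A.biUnion F := by
    ext π
    simp only [Finset.mem_univ, true_iff, Finset.mem_biUnion]
    obtain ⟨b, hb, hmax⟩ := Finset.exists_max_image A (fun a => π⁻¹ a) ⟨j, hj⟩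
    exact ⟨b, hb, by simp only [hF, Finset.mem_filter, Finset.mem_univ, true_and]; exact hmax⟩
  have hdisj : ∀ x ∈ A, ∀ y ∈ A, x ≠ y → Disjoint (F x) (F y) := by
    intro x hx y hy hxy
    rw [Finset.disjoint_left]
    intro π hπx hπy
    simp only [hF, Finset.mem_filter, Finset.mem_univ, true_and] at hπx hπy
    have h1 : π⁻¹ x ≤ π⁻¹ y := hπy x hx
    have h2 : π⁻¹ y ≤ π⁻¹ x := hπx y hy
    have : π⁻¹ x = π⁻¹ y := le_antisymm h1 h2
    exact hxy (π⁻¹.injective this)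
  have : n.factorial = ∑ a ∈ A, (F a).card := by
    rw [← Finset.card_biUnion hdisj, ← hcover, Finset.card_univ, Fintype.card_perm,
      Fintype.card_fin]
  rw [this, Finset.sum_congr rfl hcard, Finset.sum_const, smul_eq_mul, mul_comm]

lemma avg_condExp_deriv (n : ℕ) (j : Fin n) (h : (Fin n → Bool) → X) (ε : Fin n → Bool) :
    (n.factorial : ℝ)⁻¹ • ∑ π : Equiv.Perm (Fin n),
        Epi n π (((π⁻¹ j : Fin n) : ℕ) + 1) (cubeDeriv n j h) ε
      = invLapDeriv n j h ε := by
  have step1 : ∀ π : Equiv.Perm (Fin n),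
      Epi n π (((π⁻¹ j : Fin n) : ℕ) + 1) (cubeDeriv n j h) ε
        = ∑ A : Finset (Fin n),
            (if (∀ a ∈ A, π⁻¹ a ≤ π⁻¹ j) ∧ j ∈ A
              then walsh n A ε • walshCoeff n h A else 0) := by
    intro π
    rw [Epi, condExp_walsh_repr]
    set S := (firstIdx n (((π⁻¹ j : Fin n) : ℕ) + 1)).image π with hS
    have hpow : S.powerset = univ.filter (fun A : Finset (Fin n) => A ⊆ S) := by
      ext A; simp
    have hsub : ∀ A : Finset (Fin n), A ⊆ S ↔ (∀ a ∈ A, π⁻¹ a ≤ π⁻¹ j) := by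
      intro A
      constructor
      · intro hAS a ha
        have := (mem_image_firstIdx n π _ a).1 (hAS ha)
        rw [Fin.le_def]
        omega
      · intro hall a ha
        rw [hS, mem_image_firstIdx]
        have := hall a ha
        rw [Fin.le_def] at this
        omega
    rw [hpow, Finset.sum_filter]
    refine Finset.sum_congr rfl fun A _ => ?_
    rw [walshCoeff_deriv]
    by_cases h1 : A ⊆ S
    · rw [if_pos h1, if_congr (iff_of_true ((hsub A).1 h1) trivial |> fun _ => Iff.rfl) rfl rfl]
      by_cases h2 : j ∈ A
      · rw [if_pos h2, if_pos ⟨(hsub A).1 h1, h2⟩]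
      · rw [if_neg h2, if_neg (fun hc => h2 hc.2), smul_zero]
    · rw [if_neg h1, if_neg (fun hc => h1 ((hsub A).2 hc.1))]
  simp only [step1]
  rw [Finset.sum_comm]
  have step2 : ∀ A : Finset (Fin n),
      ∑ π : Equiv.Perm (Fin n),
        (if (∀ a ∈ A, π⁻¹ a ≤ π⁻¹ j) ∧ j ∈ A
          then walsh n A ε • walshCoeff n h A else 0)
      = if j ∈ A then
          ((univ.filter fun π : Equiv.Perm (Fin n) => ∀ a ∈ A, π⁻¹ a ≤ π⁻¹ j).card : ℝ) •
            (walsh n A ε • walshCoeff n h A)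
        else 0 := by
    intro A
    by_cases h2 : j ∈ A
    · rw [if_pos h2]
      have : ∀ π : Equiv.Perm (Fin n),
          (if (∀ a ∈ A, π⁻¹ a ≤ π⁻¹ j) ∧ j ∈ A
            then walsh n A ε • walshCoeff n h A else 0)
          = (if (∀ a ∈ A, π⁻¹ a ≤ π⁻¹ j)
            then walsh n A ε • walshCoeff n h A else 0) := by
        intro π
        by_cases h1 : ∀ a ∈ A, π⁻¹ a ≤ π⁻¹ j
        · rw [if_pos ⟨h1, h2⟩, if_pos h1]
        · rw [if_neg (fun hc => h1 hc.1), if_neg h1]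
      rw [Finset.sum_congr rfl fun π _ => this π, ← Finset.sum_filter, Finset.sum_const]
      rw [← Nat.cast_smul_eq_nsmul ℝ]
    · rw [if_neg h2]
      exact Finset.sum_eq_zero fun π _ => if_neg (fun hc => h2 hc.2)
  rw [Finset.sum_congr rfl fun A _ => step2 A]
  rw [invLapDeriv, Finset.sum_filter, Finset.smul_sum]
  refine Finset.sum_congr rfl fun A _ => ?_
  by_cases h2 : j ∈ A
  · rw [if_pos h2, if_pos h2]
    have hcount := count_perm n A j h2
    have hAne : (A.card : ℝ) ≠ 0 := by
      have : 0 < A.card := Finset.card_pos.2 ⟨j, h2⟩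
      positivity
    have hfac : (n.factorial : ℝ) ≠ 0 := by positivity
    have hcR : ((univ.filter fun π : Equiv.Perm (Fin n) =>
        ∀ a ∈ A, π⁻¹ a ≤ π⁻¹ j).card : ℝ) * A.card = n.factorial := by
      exact_mod_cast congrArg (Nat.cast (R := ℝ)) hcount
    simp only [smul_smul]
    set c := ((univ.filter fun π : Equiv.Perm (Fin n) =>
        ∀ a ∈ A, π⁻¹ a ≤ π⁻¹ j).card : ℝ) with hc
    have key : ((n.factorial : ℝ))⁻¹ * c = ((A.card : ℝ))⁻¹ := by
      field_simp
      linarith [hcR]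
    rw [← mul_assoc, key]
  · rw [if_neg h2, if_neg h2, smul_zero]

lemma avg_identity (n : ℕ) (f : Fin n → (Fin n → Bool) → X) (ε : Fin n → Bool) :
    (n.factorial : ℝ)⁻¹ • ∑ π : Equiv.Perm (Fin n),
        (∑ i : Fin n, Epi n π ((i : ℕ) + 1) (cubeDeriv n (π i) (f (π i))) ε)
      = ∑ j : Fin n, invLapDeriv n j (f j) ε := by
  have hre : ∀ π : Equiv.Perm (Fin n),
      ∑ i : Fin n, Epi n π ((i : ℕ) + 1) (cubeDeriv n (π i) (f (π i))) ε
        = ∑ j : Fin n, Epi n π (((π⁻¹ j : Fin n) : ℕ) + 1) (cubeDeriv n j (f j)) ε := by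
    intro π
    exact Fintype.sum_equiv π _ _ (fun i => by rw [Equiv.Perm.coe_inv, Equiv.symm_apply_apply])
  simp only [hre]
  rw [Finset.sum_comm, Finset.smul_sum]
  exact Finset.sum_congr rfl fun j _ => avg_condExp_deriv n j (f j) ε

lemma cubeLpNorm_le_sum_smul (n : ℕ) (p : ℝ) (hp : 1 ≤ p) {ι : Type*} (s : Finset ι)
    (w : ι → ℝ) (hw : ∀ i ∈ s, 0 ≤ w i) (F : ι → (Fin n → Bool) → X) :
    cubeLpNorm n p (fun ε => ∑ i ∈ s, w i • F i ε) ≤ ∑ i ∈ s, w i * cubeLpNorm n p (F i) := by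
  haveI : Fact (1 ≤ ENNReal.ofReal p) := ⟨ENNReal.one_le_ofReal.2 hp⟩
  set P := ENNReal.ofReal p with hP
  have hp0 : (0:ℝ) ≤ p := by linarith
  have hpt : 0 < P.toReal := by rw [hP, ENNReal.toReal_ofReal hp0]; linarith
  have bridge : ∀ g : (Fin n → Bool) → X, cubeLpNorm n p g
      = (((2:ℝ)^n)⁻¹)^(1/p) * ‖(WithLp.equiv P (∀ _ : Fin n → Bool, X)).symm g‖ := by
    intro g
    rw [cubeLpNorm, PiLp.norm_eq_sum hpt, hP, ENNReal.toReal_ofReal hp0]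
    rw [Real.mul_rpow (by positivity) (by positivity)]
    have : ∀ ε : Fin n → Bool, ‖(WithLp.equiv P (∀ _ : Fin n → Bool, X)).symm g ε‖ = ‖g ε‖ := by
      intro ε; rw [WithLp.equiv_symm_apply, PiLp.toLp_apply]
    rw [hP] at this
    simp only [this]
  have key : (WithLp.equiv P (∀ _ : Fin n → Bool, X)).symm (fun ε => ∑ i ∈ s, w i • F i ε)
      = ∑ i ∈ s, w i • (WithLp.equiv P (∀ _ : Fin n → Bool, X)).symm (F i) := by
    ext ε
    simp [WithLp.equiv_symm_apply, PiLp.toLp_apply]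
  rw [bridge, key]
  have hC : (0:ℝ) ≤ (((2:ℝ)^n)⁻¹)^(1/p) := by positivity
  calc (((2:ℝ)^n)⁻¹)^(1/p) * ‖∑ i ∈ s, w i • (WithLp.equiv P (∀ _ : Fin n → Bool, X)).symm (F i)‖
      ≤ (((2:ℝ)^n)⁻¹)^(1/p) * ∑ i ∈ s, w i * ‖(WithLp.equiv P (∀ _ : Fin n → Bool, X)).symm (F i)‖ := by
        refine mul_le_mul_of_nonneg_left ?_ hC
        refine le_trans (norm_sum_le _ _) ?_
        refine Finset.sum_le_sum fun i hi => ?_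
        rw [norm_smul, Real.norm_eq_abs, abs_of_nonneg (hw i hi)]
    _ = ∑ i ∈ s, w i * cubeLpNorm n p (F i) := by
        rw [Finset.mul_sum]
        refine Finset.sum_congr rfl fun i hi => ?_
        rw [bridge]
        ring

lemma cubeLpNorm_nonneg (n : ℕ) (p : ℝ) (f : (Fin n → Bool) → X) : 0 ≤ cubeLpNorm n p f := by
  rw [cubeLpNorm]
  apply Real.rpow_nonneg
  apply mul_nonneg (by positivity)
  exact Finset.sum_nonneg fun ε _ => Real.rpow_nonneg (norm_nonneg _) _

lemma Epi_Epi (n : ℕ) (π : Equiv.Perm (Fin n)) (k : ℕ) (h : (Fin n → Bool) → X) :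
    Epi n π k (Epi n π k h) = Epi n π k h :=
  condExp_condExp n _ _ (subset_refl _) h

lemma Epi_prev_eq_zero (n : ℕ) (π : Equiv.Perm (Fin n)) (i : Fin n)
    (h : (Fin n → Bool) → X) :
    Epi n π (i : ℕ) (Epi n π ((i : ℕ) + 1) (cubeDeriv n (π i) h)) = 0 := by
  have hsub : (firstIdx n (i : ℕ)).image π ⊆ (firstIdx n ((i : ℕ) + 1)).image π := by
    apply Finset.image_subset_image
    intro j hj
    simp only [firstIdx, Finset.mem_filter, Finset.mem_univ, true_and] at hj ⊢
    omega
  rw [Epi, Epi, condExp_condExp n _ _ hsub]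
  apply condExp_deriv_eq_zero
  intro hmem
  have := (mem_image_firstIdx n π _ _).1 hmem
  rw [Equiv.Perm.coe_inv, Equiv.symm_apply_apply] at this
  omega

/-- **Corollary of the paper**: under the Stein and UMD⁻ hypotheses,
`‖Σᵢ Δ⁻¹∂ᵢfᵢ‖_p ≤ s·b·(2⁻ⁿ Σ_δ ‖Σᵢ δᵢ∂ᵢfᵢ‖_p^p)^{1/p}`. -/
theorem invLaplacian_pisier (p s b : ℝ) (hp : 1 < p) (hs : 0 < s) (hb : 0 < b)
    (X : Type*) [NormedAddCommGroup X] [NormedSpace ℝ X] [CompleteSpace X]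
    (hStein : SteinIneq X p s) (hUMD : UMDminusIneq X p b)
    (n : ℕ) (hn : 0 < n) (f : Fin n → (Fin n → Bool) → X) :
    cubeLpNorm n p (fun ε => ∑ i : Fin n, invLapDeriv n i (f i) ε)
      ≤ s * b * (((2 : ℝ) ^ n)⁻¹ * ∑ δ : Fin n → Bool,
          (cubeLpNorm n p fun ε =>
            ∑ i : Fin n, sgn (δ i) • cubeDeriv n i (f i) ε) ^ p) ^ (1 / p) := by
  classical
  set Q : ℝ := (((2 : ℝ) ^ n)⁻¹ * ∑ δ : Fin n → Bool,
      (cubeLpNorm n p fun ε =>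
        ∑ i : Fin n, sgn (δ i) • cubeDeriv n i (f i) ε) ^ p) ^ (1 / p) with hQdef
  have hQ0 : 0 ≤ Q := by
    rw [hQdef]
    apply Real.rpow_nonneg
    apply mul_nonneg (by positivity)
    exact Finset.sum_nonneg fun δ _ => Real.rpow_nonneg (cubeLpNorm_nonneg _ _ _) _
  have perπ : ∀ π : Equiv.Perm (Fin n),
      cubeLpNorm n p (fun ε => ∑ i : Fin n,
          Epi n π ((i : ℕ) + 1) (cubeDeriv n (π i) (f (π i))) ε)
        ≤ s * (b * Q) := by
    intro π
    have hcond : ∀ i : Fin n,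
        Epi n π ((i : ℕ) + 1)
            ((fun i : Fin n => Epi n π ((i : ℕ) + 1) (cubeDeriv n (π i) (f (π i)))) i)
          = (fun i : Fin n => Epi n π ((i : ℕ) + 1) (cubeDeriv n (π i) (f (π i)))) i ∧
        Epi n π (i : ℕ)
            ((fun i : Fin n => Epi n π ((i : ℕ) + 1) (cubeDeriv n (π i) (f (π i)))) i) = 0 := by
      intro i
      exact ⟨Epi_Epi n π _ _, Epi_prev_eq_zero n π i (f (π i))⟩
    have humd := hUMD n hn π
      (fun i : Fin n => Epi n π ((i : ℕ) + 1) (cubeDeriv n (π i) (f (π i)))) hcond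
    have hstein := hStein n hn π (fun i : Fin n => cubeDeriv n (π i) (f (π i)))
    have hQG : (((2 : ℝ) ^ n)⁻¹ * ∑ δ : Fin n → Bool,
        (cubeLpNorm n p fun ε => ∑ i : Fin n,
          sgn (δ i) • (fun i : Fin n => cubeDeriv n (π i) (f (π i))) i ε) ^ p) ^ (1 / p) = Q := by
      rw [hQdef]
      congr 2
      have inner : ∀ δ : Fin n → Bool,
          (fun ε => ∑ i : Fin n, sgn (δ i) • cubeDeriv n (π i) (f (π i)) ε)
            = fun ε => ∑ i : Fin n, sgn ((δ ∘ π.symm) i) • cubeDeriv n i (f i) ε := by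
        intro δ
        funext ε
        refine Fintype.sum_equiv π _ _ fun i => ?_
        simp only [Function.comp_apply, Equiv.symm_apply_apply]
      have : ∀ δ : Fin n → Bool,
          (cubeLpNorm n p fun ε => ∑ i : Fin n, sgn (δ i) • cubeDeriv n (π i) (f (π i)) ε) ^ p
            = (cubeLpNorm n p fun ε =>
                ∑ i : Fin n, sgn ((δ ∘ π.symm) i) • cubeDeriv n i (f i) ε) ^ p := by
        intro δ
        rw [inner δ]
      rw [Finset.sum_congr rfl fun δ _ => this δ]
      refine Fintype.sum_equiv (Equiv.arrowCongr π (Equiv.refl Bool)) _ _ fun δ => ?_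
      congr 1
    rw [hQG] at hstein
    refine le_trans humd ?_
    have := mul_le_mul_of_nonneg_left hstein (le_of_lt hb)
    calc b * (((2 : ℝ) ^ n)⁻¹ * ∑ δ : Fin n → Bool,
          (cubeLpNorm n p fun ε => ∑ i : Fin n,
            sgn (δ i) • (fun i : Fin n =>
              Epi n π ((i : ℕ) + 1) (cubeDeriv n (π i) (f (π i)))) i ε) ^ p) ^ (1 / p)
        ≤ b * (s * Q) := this
      _ = s * (b * Q) := by ring
  -- average over permutations
  have hfact : (0:ℝ) < (n.factorial : ℝ) := by positivity
  have lhs_eq : (fun ε => ∑ i : Fin n, invLapDeriv n i (f i) ε)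
      = fun ε => ∑ π ∈ (univ : Finset (Equiv.Perm (Fin n))), (n.factorial : ℝ)⁻¹ •
          (fun ε' : Fin n → Bool => ∑ i : Fin n,
            Epi n π ((i : ℕ) + 1) (cubeDeriv n (π i) (f (π i))) ε') ε := by
    funext ε
    rw [← avg_identity n f ε, Finset.smul_sum]
  rw [lhs_eq]
  refine le_trans (cubeLpNorm_le_sum_smul n p (le_of_lt hp) univ
    (fun _ => (n.factorial : ℝ)⁻¹) (fun _ _ => by positivity)
    (fun π => fun ε' : Fin n → Bool => ∑ i : Fin n,
      Epi n π ((i : ℕ) + 1) (cubeDeriv n (π i) (f (π i))) ε')) ?_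
  calc ∑ π : Equiv.Perm (Fin n), (n.factorial : ℝ)⁻¹ *
        cubeLpNorm n p (fun ε' : Fin n → Bool => ∑ i : Fin n,
          Epi n π ((i : ℕ) + 1) (cubeDeriv n (π i) (f (π i))) ε')
      ≤ ∑ π : Equiv.Perm (Fin n), (n.factorial : ℝ)⁻¹ * (s * (b * Q)) := by
        refine Finset.sum_le_sum fun π _ => ?_
        exact mul_le_mul_of_nonneg_left (perπ π) (by positivity)
    _ = s * b * Q := by
        rw [Finset.sum_const, Finset.card_univ, Fintype.card_perm, Fintype.card_fin,
          nsmul_eq_mul]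
        field_simp
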